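/- The local algebra K[t,s]/(t^5, t^4 − t^2s, s^2) is not isomorphic to K[z,w]/(z^5, zw, w^3): any K-algebra homomorphism sending t ↦ az + bw + (higher order) and s ↦ cz + dw + (higher order) with s² = 0 forces c = d = 0, contradicting surjectivity. -/

import Mathlib

set_option maxHeartbeats 1000000
set_option synthInstance.maxHeartbeats 400000

open MvPolynomial Finsupp

section StmtAux16

variable {K : Type*} [Field K]

private lemma stmt16_mem_span_triple' {R : Type*} [CommRing R] {a b c x : R}
    (hx : x ∈ Ideal.span {a, b, c}) : ∃ f g h, x = f * a + g * b + h * c := by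
  rw [Ideal.mem_span_insert] at hx
  obtain ⟨f, z, hz, rfl⟩ := hx
  rw [Ideal.mem_span_insert] at hz
  obtain ⟨g, z', hz', rfl⟩ := hz
  rw [Ideal.mem_span_singleton'] at hz'
  obtain ⟨h, rfl⟩ := hz'
  exact ⟨f, g, h, by ring⟩

private lemma stmt16_X0X1_eq : (X 0 : MvPolynomial (Fin 2) K) * X 1
    = monomial (single 0 1 + single 1 1) 1 := by
  rw [X, X, monomial_mul, mul_one]

private lemma stmt16_J_coeff (p : MvPolynomial (Fin 2) K)
    (hp : p ∈ Ideal.span {X 0 ^ 5, X 0 * X 1, X 1 ^ 3}) :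
    coeff 0 p = 0 ∧ coeff (single 0 2) p = 0 ∧ coeff (single 1 2) p = 0 := by
  obtain ⟨f, g, h, rfl⟩ := stmt16_mem_span_triple' hp
  rw [X_pow_eq_monomial, stmt16_X0X1_eq, X_pow_eq_monomial]
  refine ⟨?_, ?_, ?_⟩ <;>
  · rw [coeff_add, coeff_add, coeff_mul_monomial', coeff_mul_monomial', coeff_mul_monomial']
    rw [if_neg, if_neg, if_neg] <;> first
      | (intro hle; simpa using hle 1)
      | (intro hle; simpa using hle 0)
      | simp

private lemma stmt16_M2_eq : (Ideal.span {X 0, X 1} : Ideal (MvPolynomial (Fin 2) K)) ^ 2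
    = Ideal.span {X 0 ^ 2, X 0 * X 1, X 1 ^ 2} := by
  have hX0 : (X 0:MvPolynomial (Fin 2) K) ∈ Ideal.span {X 0, X 1} := Ideal.subset_span (by simp)
  have hX1 : (X 1:MvPolynomial (Fin 2) K) ∈ Ideal.span {X 0, X 1} := Ideal.subset_span (by simp)
  apply le_antisymm
  · rw [pow_two, Ideal.span_mul_span]
    refine Ideal.span_le.2 ?_
    rintro x hx
    simp only [Set.mem_mul, Set.mem_iUnion, Set.mem_singleton_iff] at hx
    obtain ⟨s, hs, t, ht, rfl⟩ := hx
    rcases hs with rfl | rfl <;> rcases ht with rfl | rfl <;>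
      refine Ideal.subset_span ?_ <;> simp [pow_two, mul_comm]
  · refine Ideal.span_le.2 ?_
    rintro x (rfl | rfl | rfl)
    · exact Ideal.pow_mem_pow hX0 2
    · rw [pow_two]; exact Ideal.mul_mem_mul hX0 hX1
    · exact Ideal.pow_mem_pow hX1 2

private lemma stmt16_M2_coeff (p : MvPolynomial (Fin 2) K)
    (hp : p ∈ (Ideal.span {X 0, X 1} : Ideal (MvPolynomial (Fin 2) K)) ^ 2) :
    coeff 0 p = 0 ∧ coeff (single 0 1) p = 0 ∧ coeff (single 1 1) p = 0 := by
  rw [stmt16_M2_eq] at hp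
  obtain ⟨f, g, h, rfl⟩ := stmt16_mem_span_triple' hp
  rw [X_pow_eq_monomial, stmt16_X0X1_eq, X_pow_eq_monomial]
  refine ⟨?_, ?_, ?_⟩ <;>
  · rw [coeff_add, coeff_add, coeff_mul_monomial', coeff_mul_monomial', coeff_mul_monomial']
    rw [if_neg, if_neg, if_neg] <;> first
      | (intro hle; simpa using hle 1)
      | (intro hle; simpa using hle 0)
      | simp

private lemma stmt16_monomial_decomp (d : Fin 2 →₀ ℕ) (c : K) :
    monomial d c = X 0 ^ (d 0) * (X 1 ^ (d 1) * C c) := by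
  conv_lhs => rw [show d = single 0 (d 0) + single 1 (d 1) by ext i; fin_cases i <;> simp,
    ← add_zero (single 1 (d 1))]
  rw [monomial_single_add, monomial_single_add, monomial_zero']

private lemma stmt16_prod_mem_M {a b : ℕ} (c : K) (h : 1 ≤ a + b) :
    (X 0:MvPolynomial (Fin 2) K) ^ a * (X 1 ^ b * C c) ∈ Ideal.span {X 0, X 1} := by
  have hX0 : (X 0:MvPolynomial (Fin 2) K) ∈ Ideal.span {X 0, X 1} := Ideal.subset_span (by simp)
  have hX1 : (X 1:MvPolynomial (Fin 2) K) ∈ Ideal.span {X 0, X 1} := Ideal.subset_span (by simp)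
  by_cases ha : 1 ≤ a
  · obtain ⟨a', rfl⟩ := Nat.exists_eq_add_of_le ha
    rw [show (X 0:MvPolynomial (Fin 2) K) ^ (1+a') * (X 1 ^ b * C c)
      = (X 0 ^ a' * (X 1 ^ b * C c)) * X 0 by ring]
    exact Ideal.mul_mem_left _ _ hX0
  · have hb : 1 ≤ b := by omega
    obtain ⟨b', rfl⟩ := Nat.exists_eq_add_of_le hb
    rw [show (X 0:MvPolynomial (Fin 2) K) ^ a * (X 1 ^ (1+b') * C c)
      = (X 0 ^ a * (X 1 ^ b' * C c)) * X 1 by ring]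
    exact Ideal.mul_mem_left _ _ hX1

private lemma stmt16_prod_mem_M2 {a b : ℕ} (c : K) (h : 2 ≤ a + b) :
    (X 0:MvPolynomial (Fin 2) K) ^ a * (X 1 ^ b * C c) ∈ (Ideal.span {X 0, X 1}) ^ 2 := by
  have hX0 : (X 0:MvPolynomial (Fin 2) K) ∈ Ideal.span {X 0, X 1} := Ideal.subset_span (by simp)
  have hX1 : (X 1:MvPolynomial (Fin 2) K) ∈ Ideal.span {X 0, X 1} := Ideal.subset_span (by simp)
  by_cases ha : 2 ≤ a
  · obtain ⟨a', rfl⟩ := Nat.exists_eq_add_of_le ha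
    rw [show (X 0:MvPolynomial (Fin 2) K) ^ (2+a') * (X 1 ^ b * C c)
      = (X 0 ^ a' * (X 1 ^ b * C c)) * X 0 ^ 2 by ring]
    exact Ideal.mul_mem_left _ _ (Ideal.pow_mem_pow hX0 2)
  · by_cases hb : 2 ≤ b
    · obtain ⟨b', rfl⟩ := Nat.exists_eq_add_of_le hb
      rw [show (X 0:MvPolynomial (Fin 2) K) ^ a * (X 1 ^ (2+b') * C c)
        = (X 0 ^ a * (X 1 ^ b' * C c)) * X 1 ^ 2 by ring]
      exact Ideal.mul_mem_left _ _ (Ideal.pow_mem_pow hX1 2)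
    · have ha1 : a = 1 := by omega
      have hb1 : b = 1 := by omega
      subst ha1 hb1
      rw [show (X 0:MvPolynomial (Fin 2) K) ^ 1 * (X 1 ^ 1 * C c)
        = (C c) * (X 0 * X 1) by ring, pow_two]
      exact Ideal.mul_mem_left _ _ (Ideal.mul_mem_mul hX0 hX1)

private lemma stmt16_mem_M_of_coeff (p : MvPolynomial (Fin 2) K) (h0 : coeff 0 p = 0) :
    p ∈ (Ideal.span {X 0, X 1} : Ideal (MvPolynomial (Fin 2) K)) := by
  rw [p.as_sum]
  refine Ideal.sum_mem _ fun d hd => ?_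
  rw [stmt16_monomial_decomp]
  refine stmt16_prod_mem_M _ ?_
  by_contra hc
  have h1 : d 0 = 0 ∧ d 1 = 0 := by omega
  have : d = 0 := by ext i; fin_cases i <;> simp [h1.1, h1.2]
  rw [MvPolynomial.mem_support_iff, this, h0] at hd
  exact hd rfl

private lemma stmt16_mem_M2_of_coeff (p : MvPolynomial (Fin 2) K) (h0 : coeff 0 p = 0)
    (h1 : coeff (single 0 1) p = 0) (h2 : coeff (single 1 1) p = 0) :
    p ∈ (Ideal.span {X 0, X 1} : Ideal (MvPolynomial (Fin 2) K)) ^ 2 := by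
  rw [p.as_sum]
  refine Ideal.sum_mem _ fun d hd => ?_
  rw [stmt16_monomial_decomp]
  refine stmt16_prod_mem_M2 _ ?_
  rw [MvPolynomial.mem_support_iff] at hd
  by_contra hc
  have hcases : (d 0 = 0 ∧ d 1 = 0) ∨ (d 0 = 1 ∧ d 1 = 0) ∨ (d 0 = 0 ∧ d 1 = 1) := by omega
  rcases hcases with ⟨e0, e1⟩ | ⟨e0, e1⟩ | ⟨e0, e1⟩
  · exact hd (by rw [show d = 0 by ext i; fin_cases i <;> simp [e0, e1], h0])
  · exact hd (by rw [show d = single 0 1 by ext i; fin_cases i <;> simp [e0, e1], h1])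
  · exact hd (by rw [show d = single 1 1 by ext i; fin_cases i <;> simp [e0, e1], h2])

private lemma stmt16_sq_coeff (p : MvPolynomial (Fin 2) K) (i : Fin 2) (h0 : coeff 0 p = 0) :
    coeff (single i 2) (p * p) = coeff (single i 1) p * coeff (single i 1) p := by
  rw [coeff_mul, Finsupp.antidiagonal_single, Finset.sum_map]
  rw [show Finset.HasAntidiagonal.antidiagonal (2:ℕ) = {(0,2),(1,1),(2,0)} by decide]
  rw [Finset.sum_insert (by decide), Finset.sum_pair (by decide)]
  simp [h0]

end StmtAux16

/-- `K[t,s]/(t⁵, t⁴ − t²s, s²)` is not isomorphic to `K[z,w]/(z⁵, zw, w³)`: every algebra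
homomorphism sends `s` into the square of the maximal ideal (forcing `c = d = 0`), hence no
homomorphism is surjective and there is no isomorphism. -/
theorem stmt_16 (K : Type*) [Field K] [CharZero K]
    (I : Ideal (MvPolynomial (Fin 2) K))
    (hI : I = Ideal.span {X 0 ^ 5, X 0 ^ 4 - X 0 ^ 2 * X 1, X 1 ^ 2})
    (J : Ideal (MvPolynomial (Fin 2) K))
    (hJ : J = Ideal.span {X 0 ^ 5, X 0 * X 1, X 1 ^ 3}) :
    (∀ φ : (MvPolynomial (Fin 2) K ⧸ I) →ₐ[K] (MvPolynomial (Fin 2) K ⧸ J),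
      φ (Ideal.Quotient.mk I (X 1)) ∈
        (Ideal.span {Ideal.Quotient.mk J (X 0), Ideal.Quotient.mk J (X 1)}) ^ 2) ∧
    (∀ φ : (MvPolynomial (Fin 2) K ⧸ I) →ₐ[K] (MvPolynomial (Fin 2) K ⧸ J),
      ¬ Function.Surjective φ) ∧
    IsEmpty ((MvPolynomial (Fin 2) K ⧸ I) ≃ₐ[K] (MvPolynomial (Fin 2) K ⧸ J)) := by
  have hmap : Ideal.map (Ideal.Quotient.mk J) (Ideal.span {X 0, X 1})
      = Ideal.span {Ideal.Quotient.mk J (X 0), Ideal.Quotient.mk J (X 1)} := by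
    rw [Ideal.map_span]
    congr 1
    rw [Set.image_insert_eq, Set.image_singleton]
  -- Part 1
  have key1 : ∀ φ : (MvPolynomial (Fin 2) K ⧸ I) →ₐ[K] (MvPolynomial (Fin 2) K ⧸ J),
      φ (Ideal.Quotient.mk I (X 1)) ∈
        (Ideal.span {Ideal.Quotient.mk J (X 0), Ideal.Quotient.mk J (X 1)}) ^ 2 := by
    intro φ
    obtain ⟨p, hp⟩ := Ideal.Quotient.mk_surjective (φ (Ideal.Quotient.mk I (X 1)))
    have hs2 : (Ideal.Quotient.mk I (X 1 : MvPolynomial (Fin 2) K)) ^ 2 = 0 := by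
      rw [← map_pow]
      exact Ideal.Quotient.eq_zero_iff_mem.2 (hI ▸ Ideal.subset_span (by simp))
    have hy2 : (φ (Ideal.Quotient.mk I (X 1))) ^ 2 = 0 := by
      rw [← map_pow, hs2, map_zero]
    have hpJ : p ^ 2 ∈ J := by
      rw [← Ideal.Quotient.eq_zero_iff_mem, map_pow, hp, hy2]
    have hco := stmt16_J_coeff (p ^ 2) (hJ ▸ hpJ)
    have h0 : coeff 0 p = 0 := by
      have hc : (coeff 0 p) ^ 2 = 0 := by
        have h := map_pow (constantCoeff (σ := Fin 2) (R := K)) p 2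
        rw [constantCoeff_eq] at h
        rw [← h]; exact hco.1
      exact (pow_eq_zero_iff two_ne_zero).mp hc
    have h1 : coeff (single 0 1) p = 0 := by
      have h2' : coeff (single 0 2) (p * p) = 0 := by rw [← pow_two]; exact hco.2.1
      have hs := stmt16_sq_coeff p 0 h0
      rw [h2'] at hs
      exact mul_self_eq_zero.mp hs.symm
    have h2 : coeff (single 1 1) p = 0 := by
      have h2' : coeff (single 1 2) (p * p) = 0 := by rw [← pow_two]; exact hco.2.2
      have hs := stmt16_sq_coeff p 1 h0
      rw [h2'] at hs
      exact mul_self_eq_zero.mp hs.symm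
    have hm2 := stmt16_mem_M2_of_coeff p h0 h1 h2
    rw [← hmap, ← Ideal.map_pow, ← hp]
    exact Ideal.mem_map_of_mem _ hm2
  -- J is contained in the square of the maximal ideal
  have hX0 : (X 0 : MvPolynomial (Fin 2) K) ∈ Ideal.span {X 0, X 1} := Ideal.subset_span (by simp)
  have hX1 : (X 1 : MvPolynomial (Fin 2) K) ∈ Ideal.span {X 0, X 1} := Ideal.subset_span (by simp)
  have hJle : J ≤ (Ideal.span {X 0, X 1} : Ideal (MvPolynomial (Fin 2) K)) ^ 2 := by
    rw [hJ]
    refine Ideal.span_le.2 ?_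
    rintro x (rfl | rfl | rfl)
    · rw [show (X 0 : MvPolynomial (Fin 2) K) ^ 5 = (X 0 ^ 3) * X 0 ^ 2 by ring]
      exact Ideal.mul_mem_left _ _ (Ideal.pow_mem_pow hX0 2)
    · rw [pow_two]; exact Ideal.mul_mem_mul hX0 hX1
    · rw [show (X 1 : MvPolynomial (Fin 2) K) ^ 3 = (X 1) * X 1 ^ 2 by ring]
      exact Ideal.mul_mem_left _ _ (Ideal.pow_mem_pow hX1 2)
  -- Part 2
  have key2 : ∀ φ : (MvPolynomial (Fin 2) K ⧸ I) →ₐ[K] (MvPolynomial (Fin 2) K ⧸ J), ¬ Function.Surjective φ := by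
    intro φ hsurj
    set z : MvPolynomial (Fin 2) K ⧸ J := Ideal.Quotient.mk J (X 0) with hz_def
    set w : MvPolynomial (Fin 2) K ⧸ J := Ideal.Quotient.mk J (X 1) with hw_def
    set mB2 : Ideal (MvPolynomial (Fin 2) K ⧸ J) := (Ideal.span {z, w}) ^ 2 with hmB2_def
    set x : MvPolynomial (Fin 2) K ⧸ J := φ (Ideal.Quotient.mk I (X 0)) with hx_def
    set y : MvPolynomial (Fin 2) K ⧸ J := φ (Ideal.Quotient.mk I (X 1)) with hy_def
    have hy : y ∈ mB2 := key1 φ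
    -- x is in the maximal ideal
    have hx5 : x ^ 5 = 0 := by
      rw [hx_def, ← map_pow, ← map_pow,
        Ideal.Quotient.eq_zero_iff_mem.2 (hI ▸ Ideal.subset_span (by simp)), map_zero]
    have hxm : x ∈ Ideal.span {z, w} := by
      obtain ⟨q, hq⟩ := Ideal.Quotient.mk_surjective x
      have hq5 : q ^ 5 ∈ J := by
        rw [← Ideal.Quotient.eq_zero_iff_mem, map_pow, hq, hx5]
      have h0 : coeff 0 q = 0 := by
        have hc : (coeff 0 q) ^ 5 = 0 := by
          have h := map_pow (constantCoeff (σ := Fin 2) (R := K)) q 5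
          rw [constantCoeff_eq] at h
          rw [← h]; exact (stmt16_J_coeff _ (hJ ▸ hq5)).1
        exact (pow_eq_zero_iff (by norm_num : (5:ℕ) ≠ 0)).mp hc
      rw [← hmap, ← hq]
      exact Ideal.mem_map_of_mem _ (stmt16_mem_M_of_coeff q h0)
    have hxx : x * x ∈ mB2 := by
      rw [hmB2_def, pow_two]; exact Ideal.mul_mem_mul hxm hxm
    -- the subalgebra K·1 + K·x + mB2
    set S : Submodule K (MvPolynomial (Fin 2) K ⧸ J) :=
      Submodule.span K {1, x} ⊔ Submodule.restrictScalars K mB2 with hS_def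
    have hSone : (1 : MvPolynomial (Fin 2) K ⧸ J) ∈ S := Submodule.mem_sup_left (Submodule.subset_span (by simp))
    have hSx : x ∈ S := Submodule.mem_sup_left (Submodule.subset_span (by simp))
    have hsmul_mem : ∀ (c : K) (u : MvPolynomial (Fin 2) K ⧸ J), u ∈ mB2 → c • u ∈ mB2 := by
      intro c u hu
      have h : c • u = algebraMap K _ c * u := Algebra.smul_def c u
      rw [h]
      exact Ideal.mul_mem_left _ _ hu
    have hSmul : ∀ u v : MvPolynomial (Fin 2) K ⧸ J, u ∈ S → v ∈ S → u * v ∈ S := by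
      intro u v hu hv
      obtain ⟨u1, hu1, u2, hu2, rfl⟩ := Submodule.mem_sup.1 hu
      obtain ⟨v1, hv1, v2, hv2, rfl⟩ := Submodule.mem_sup.1 hv
      obtain ⟨a, b, rfl⟩ := Submodule.mem_span_pair.1 hu1
      obtain ⟨c, d, rfl⟩ := Submodule.mem_span_pair.1 hv1
      simp only [add_mul, mul_add, smul_mul_assoc, mul_smul_comm, smul_smul, mul_one, one_mul]
      refine Submodule.add_mem _ (Submodule.add_mem _ ?_ ?_) ?_
      · exact S.smul_mem c hu
      · refine S.smul_mem d (Submodule.add_mem _ (Submodule.add_mem _ ?_ ?_) ?_)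
        · exact Submodule.mem_sup_left (Submodule.smul_mem _ a (Submodule.subset_span (by simp)))
        · exact Submodule.mem_sup_right ((Submodule.restrictScalars K mB2).smul_mem b hxx)
        · exact Submodule.mem_sup_right (Ideal.mul_mem_right x _ hu2)
      · refine Submodule.add_mem _ (Submodule.add_mem _ ?_ ?_) ?_
        · exact Submodule.mem_sup_right ((Submodule.restrictScalars K mB2).smul_mem a hv2)
        · exact Submodule.mem_sup_right ((Submodule.restrictScalars K mB2).smul_mem b (Ideal.mul_mem_left _ x hv2))
        · exact Submodule.mem_sup_right (Ideal.mul_mem_right v2 _ hu2)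
    -- every element of the quotient lies in S
    have hAtop : ∀ a : MvPolynomial (Fin 2) K ⧸ I,
        a ∈ Algebra.adjoin K ({Ideal.Quotient.mk I (X 0), Ideal.Quotient.mk I (X 1)} :
          Set (MvPolynomial (Fin 2) K ⧸ I)) := by
      intro a
      obtain ⟨pa, rfl⟩ := Ideal.Quotient.mk_surjective a
      have hpa : pa ∈ Algebra.adjoin K (Set.range (X : Fin 2 → MvPolynomial (Fin 2) K)) := by
        rw [MvPolynomial.adjoin_range_X]; trivial
      have hmem : (Ideal.Quotient.mkₐ K I) pa ∈
          (Algebra.adjoin K (Set.range (X : Fin 2 → MvPolynomial (Fin 2) K))).map (Ideal.Quotient.mkₐ K I) :=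
        ⟨pa, hpa, rfl⟩
      rw [AlgHom.map_adjoin] at hmem
      refine Algebra.adjoin_mono ?_ hmem
      rintro _ ⟨_, ⟨i, rfl⟩, rfl⟩
      fin_cases i <;> simp [Ideal.Quotient.mkₐ_eq_mk]
    have hStop : ∀ b : MvPolynomial (Fin 2) K ⧸ J, b ∈ S := by
      intro b
      obtain ⟨a, rfl⟩ := hsurj b
      have h1 : φ a ∈ (Algebra.adjoin K ({Ideal.Quotient.mk I (X 0),
          Ideal.Quotient.mk I (X 1)} : Set (MvPolynomial (Fin 2) K ⧸ I))).map φ := ⟨a, hAtop a, rfl⟩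
      rw [AlgHom.map_adjoin] at h1
      have h2 : Algebra.adjoin K (φ '' {Ideal.Quotient.mk I (X 0), Ideal.Quotient.mk I (X 1)})
          ≤ (S.toSubalgebra hSone hSmul) := by
        refine Algebra.adjoin_le ?_
        rintro _ ⟨u, hu, rfl⟩
        rcases hu with rfl | rfl
        · exact hSx
        · exact Submodule.mem_sup_right (by rwa [Submodule.restrictScalars_mem])
      exact h2 h1
    -- independence of 1, z, w modulo mB2
    have ind : ∀ a b c : K, a • (1 : MvPolynomial (Fin 2) K ⧸ J) + b • z + c • w ∈ mB2 →
        a = 0 ∧ b = 0 ∧ c = 0 := by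
      intro a b c habc
      set q : MvPolynomial (Fin 2) K := a • (1 : MvPolynomial (Fin 2) K) + b • X 0 + c • X 1 with hq_def
      have hq : Ideal.Quotient.mk J q = a • (1 : MvPolynomial (Fin 2) K ⧸ J) + b • z + c • w := by
        rw [hq_def, ← Ideal.Quotient.mkₐ_eq_mk K J, map_add, map_add, map_smul, map_smul,
          map_smul, map_one, Ideal.Quotient.mkₐ_eq_mk]
      have hmem : q ∈ (Ideal.span {X 0, X 1} : Ideal (MvPolynomial (Fin 2) K)) ^ 2 := by
        have : Ideal.Quotient.mk J q ∈ Ideal.map (Ideal.Quotient.mk J)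
            ((Ideal.span {X 0, X 1} : Ideal (MvPolynomial (Fin 2) K)) ^ 2) := by
          rw [Ideal.map_pow, hmap, hq]; exact habc
        rw [Ideal.mem_quotient_iff_mem_sup, sup_eq_left.2 hJle] at this
        exact this
      have hco := stmt16_M2_coeff q hmem
      have e0 : coeff 0 q = a := by
        simp [hq_def, coeff_smul]
      have e1 : coeff (single 0 1) q = b := by
        simp [hq_def, coeff_smul, coeff_X', coeff_one, Finsupp.single_eq_single_iff, eq_comm, Finsupp.single_eq_zero]
      have e2 : coeff (single 1 1) q = c := by
        simp [hq_def, coeff_smul, coeff_X', coeff_one, Finsupp.single_eq_single_iff, eq_comm, Finsupp.single_eq_zero]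
      exact ⟨e0 ▸ hco.1, e1 ▸ hco.2.1, e2 ▸ hco.2.2⟩
    -- decompose z and w
    obtain ⟨z1, hz1, pz, hpz, hzeq⟩ := Submodule.mem_sup.1 (hStop z)
    obtain ⟨w1, hw1, pw, hpw, hweq⟩ := Submodule.mem_sup.1 (hStop w)
    obtain ⟨a1, b1, rfl⟩ := Submodule.mem_span_pair.1 hz1
    obtain ⟨a2, b2, rfl⟩ := Submodule.mem_span_pair.1 hw1
    rw [Submodule.restrictScalars_mem] at hpz hpw
    have hcomb : (-(b2*a1 - b1*a2)) • (1 : MvPolynomial (Fin 2) K ⧸ J) + b2 • z + (-b1) • w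
        = b2 • pz - b1 • pw := by
      rw [← hzeq, ← hweq]
      module
    have h12 := ind (-(b2*a1 - b1*a2)) b2 (-b1) (by
      rw [hcomb]
      exact Submodule.sub_mem _ (hsmul_mem _ _ hpz) (hsmul_mem _ _ hpw))
    have hb2 : b2 = 0 := h12.2.1
    have hb1 : b1 = 0 := by have := h12.2.2; rwa [neg_eq_zero] at this
    have hfinal := ind (-a1) 1 0 (by
      have : (-a1) • (1 : MvPolynomial (Fin 2) K ⧸ J) + (1:K) • z + (0:K) • w = pz := by
        rw [← hzeq, hb1]
        module
      rw [this]
      exact hpz)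
    exact one_ne_zero hfinal.2.1
  exact ⟨key1, key2, ⟨fun e => key2 e.toAlgHom e.surjective⟩⟩
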